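/- The generating function of energy over all highest binary paths equals a difference of q-binomial coefficients: for integers L ≥ 2M ≥ 0, the sum over all sequences b ∈ {1,2}^L with exactly M entries 2 such that every prefix contains at least as many 1's as 2's, of q^{E(b)} with E(b) = Σ_{j=1}^{L-1} j·[b_j < b_{j+1}], equals [L choose M]_q − [L choose M−1]_q. -/

import Mathlib

open Finset

noncomputable def q : RatFunc ℚ := RatFunc.X

noncomputable def qInt (n : ℕ) : RatFunc ℚ := ∑ i ∈ Finset.range n, q ^ i

noncomputable def qPoch (n : ℕ) : RatFunc ℚ := ∏ i ∈ Finset.range n, (1 - q ^ (i + 1))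

noncomputable def qb (n m : ℕ) : RatFunc ℚ := qPoch n / (qPoch m * qPoch (n - m))

/-- Energy of a path `b : Fin L → Bool` (`false` = 1, `true` = 2). -/
def En {L : ℕ} (b : Fin L → Bool) : ℕ :=
  ∑ i : Fin L, if h : (i : ℕ) + 1 < L then
    (if b i < b ⟨(i : ℕ) + 1, h⟩ then (i : ℕ) + 1 else 0) else 0

/-- A path is highest if every prefix has at least as many 1's as 2's. -/
def Highest {L : ℕ} (b : Fin L → Bool) : Bool :=
  decide <|
  ∀ i : Fin L, (Finset.univ.filter (fun j : Fin L => j ≤ i ∧ b j = true)).card ≤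
    (Finset.univ.filter (fun j : Fin L => j ≤ i ∧ b j = false)).card

lemma one_sub_q_pow_ne_zero (k : ℕ) : (1 : RatFunc ℚ) - q ^ (k + 1) ≠ 0 := by
  intro h
  have h1 : (q : RatFunc ℚ) ^ (k+1) = 1 := by linear_combination -h
  have h2 : (Polynomial.X : Polynomial ℚ) ^ (k+1) = 1 := by
    apply RatFunc.algebraMap_injective ℚ
    simpa [q, RatFunc.algebraMap_X, map_pow] using h1
  have h3 := congrArg Polynomial.natDegree h2
  simp [Polynomial.natDegree_X_pow] at h3

lemma qPoch_ne_zero (n : ℕ) : qPoch n ≠ 0 := by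
  rw [qPoch, Finset.prod_ne_zero_iff]
  exact fun i _ => one_sub_q_pow_ne_zero i

lemma qPoch_succ (n : ℕ) : qPoch (n + 1) = qPoch n * (1 - q ^ (n + 1)) := by
  rw [qPoch, Finset.prod_range_succ]; rfl

noncomputable def T (L M : ℕ) : RatFunc ℚ :=
  qb L M - (if M = 0 then 0 else qb L (M - 1))

lemma qPoch_zero : qPoch 0 = 1 := by simp [qPoch]

lemma qb_eq (a b d : ℕ) (h : a = b + d) : qb a b = qPoch a / (qPoch b * qPoch d) := by
  subst h; rw [qb, Nat.add_sub_cancel_left]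

lemma E0key {K : Type*} [Field K] (C x Q : K) (hC : C ≠ 0) (hg1 : 1 - x*Q ≠ 0)
    (hQ : 1 - Q ≠ 0) :
    C*(1-x*Q)*(1-x*Q^2)/((1*(1-Q))*(C*(1-x*Q))) - C*(1-x*Q)/((1*(1-Q))*C) = x*Q := by
  field_simp
  ring

lemma Ekey {K : Type*} [Field K] (A B C x y Q : K) (hB : B ≠ 0) (hC : C ≠ 0)
    (hf1 : 1 - y*Q ≠ 0) (hf2 : 1 - y*Q^2 ≠ 0) (hg1 : 1 - x*Q ≠ 0) (hg2 : 1 - x*Q^2 ≠ 0) :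
    (A*(1-x*y*Q^2)*(1-x*y*Q^3)/((B*(1-y*Q)*(1-y*Q^2))*(C*(1-x*Q)))
      - A*(1-x*y*Q^2)*(1-x*y*Q^3)/((B*(1-y*Q))*(C*(1-x*Q)*(1-x*Q^2))))
    - (A*(1-x*y*Q^2)/((B*(1-y*Q)*(1-y*Q^2))*C)
      - A*(1-x*y*Q^2)/((B*(1-y*Q))*(C*(1-x*Q))))
    = (A*(1-x*y*Q^2)/((B*(1-y*Q))*(C*(1-x*Q)))
      - A*(1-x*y*Q^2)/(B*(C*(1-x*Q)*(1-x*Q^2))))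
      + (x*y*Q^2 - 1)*(A/((B*(1-y*Q))*C) - A/(B*(C*(1-x*Q)))) := by
  have hD : B*C*((1-y*Q)*(1-y*Q^2)*((1-x*Q)*(1-x*Q^2))) ≠ 0 :=
    mul_ne_zero (mul_ne_zero hB hC)
      (mul_ne_zero (mul_ne_zero hf1 hf2) (mul_ne_zero hg1 hg2))
  have t1 : A*(1-x*y*Q^2)*(1-x*y*Q^3)/((B*(1-y*Q)*(1-y*Q^2))*(C*(1-x*Q)))
      = (A*(1-x*y*Q^2)*(1-x*y*Q^3)*(1-x*Q^2))/(B*C*((1-y*Q)*(1-y*Q^2)*((1-x*Q)*(1-x*Q^2)))) := by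
    rw [div_eq_div_iff (mul_ne_zero (mul_ne_zero (mul_ne_zero hB hf1) hf2) (mul_ne_zero hC hg1)) hD]
    ring
  have t2 : A*(1-x*y*Q^2)*(1-x*y*Q^3)/((B*(1-y*Q))*(C*(1-x*Q)*(1-x*Q^2)))
      = (A*(1-x*y*Q^2)*(1-x*y*Q^3)*(1-y*Q^2))/(B*C*((1-y*Q)*(1-y*Q^2)*((1-x*Q)*(1-x*Q^2)))) := by
    rw [div_eq_div_iff (mul_ne_zero (mul_ne_zero hB hf1) (mul_ne_zero (mul_ne_zero hC hg1) hg2)) hD]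
    ring
  have t3 : A*(1-x*y*Q^2)/((B*(1-y*Q)*(1-y*Q^2))*C)
      = (A*(1-x*y*Q^2)*((1-x*Q)*(1-x*Q^2)))/(B*C*((1-y*Q)*(1-y*Q^2)*((1-x*Q)*(1-x*Q^2)))) := by
    rw [div_eq_div_iff (mul_ne_zero (mul_ne_zero (mul_ne_zero hB hf1) hf2) hC) hD]
    ring
  have t4 : A*(1-x*y*Q^2)/((B*(1-y*Q))*(C*(1-x*Q)))
      = (A*(1-x*y*Q^2)*((1-y*Q^2)*(1-x*Q^2)))/(B*C*((1-y*Q)*(1-y*Q^2)*((1-x*Q)*(1-x*Q^2)))) := by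
    rw [div_eq_div_iff (mul_ne_zero (mul_ne_zero hB hf1) (mul_ne_zero hC hg1)) hD]
    ring
  have t5 : A*(1-x*y*Q^2)/(B*(C*(1-x*Q)*(1-x*Q^2)))
      = (A*(1-x*y*Q^2)*((1-y*Q)*(1-y*Q^2)))/(B*C*((1-y*Q)*(1-y*Q^2)*((1-x*Q)*(1-x*Q^2)))) := by
    rw [div_eq_div_iff (mul_ne_zero hB (mul_ne_zero (mul_ne_zero hC hg1) hg2)) hD]
    ring
  have t6 : A/((B*(1-y*Q))*C)
      = (A*((1-y*Q^2)*((1-x*Q)*(1-x*Q^2))))/(B*C*((1-y*Q)*(1-y*Q^2)*((1-x*Q)*(1-x*Q^2)))) := by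
    rw [div_eq_div_iff (mul_ne_zero (mul_ne_zero hB hf1) hC) hD]
    ring
  have t7 : A/(B*(C*(1-x*Q)))
      = (A*((1-y*Q)*(1-y*Q^2)*(1-x*Q^2)))/(B*C*((1-y*Q)*(1-y*Q^2)*((1-x*Q)*(1-x*Q^2)))) := by
    rw [div_eq_div_iff (mul_ne_zero hB (mul_ne_zero hC hg1)) hD]
    ring
  rw [t1, t2, t3, t4, t5, t6, t7, div_sub_div_same, div_sub_div_same, div_sub_div_same,
    div_sub_div_same, div_sub_div_same, ← mul_div_assoc, ← add_div,
    div_eq_div_iff hD hD]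
  ring

lemma E2 (c k : ℕ) :
    T (c + k + 2) (k + 1) - T (c + k + 1) (k + 1)
      = T (c + k + 1) k + (q ^ (c + k + 1) - 1) * T (c + k) k := by
  have pc1 : qPoch (c+1) = qPoch c * (1 - q^(c+1)) := qPoch_succ c
  have pc2 : qPoch (c+2) = qPoch c * (1 - q^(c+1)) * (1 - q^(c+2)) := by
    rw [show c+2 = c+1+1 by ring, qPoch_succ, qPoch_succ]
  have z1 := qPoch_ne_zero c
  have g1 : (1:RatFunc ℚ) - q^c*q ≠ 0 := by
    rw [← pow_succ]; exact one_sub_q_pow_ne_zero c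
  have g2 : (1:RatFunc ℚ) - q^c*q^2 ≠ 0 := by
    rw [show (2:ℕ) = 1+1 from rfl, ← pow_add, show c+(1+1) = c+1+1 by ring]
    exact one_sub_q_pow_ne_zero (c+1)
  rcases k with _ | j
  · rw [show c+0+2 = c+2 by ring, show c+0+1 = c+1 by ring, show c+0 = c by ring,
        show (0:ℕ)+1 = 1 by ring]
    rw [T, T, T, T, if_neg one_ne_zero, if_neg one_ne_zero, if_pos rfl, if_pos rfl]
    rw [show (1:ℕ)-1 = 0 by ring]
    rw [qb_eq (c+2) 1 (c+1) (by ring), qb_eq (c+2) 0 (c+2) (by ring),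
        qb_eq (c+1) 1 c (by ring), qb_eq (c+1) 0 (c+1) (by ring),
        qb_eq c 0 c (by ring)]
    rw [pc2, pc1, qPoch_succ 0, qPoch_zero]
    have hq : (1:RatFunc ℚ) - q ≠ 0 := by
      have := one_sub_q_pow_ne_zero 0; simpa using this
    have key := E0key (qPoch c) (q^c) q z1 g1 hq
    have e1 : qPoch c * (1-q^(c+1)) * (1-q^(c+2)) / (1*(qPoch c * (1-q^(c+1)) * (1-q^(c+2)))) = 1 := by
      rw [one_mul, div_self (mul_ne_zero (mul_ne_zero z1 (one_sub_q_pow_ne_zero c)) (one_sub_q_pow_ne_zero (c+1)))]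
    have e2 : qPoch c * (1-q^(c+1)) / (1*(qPoch c * (1-q^(c+1)))) = 1 := by
      rw [one_mul, div_self (mul_ne_zero z1 (one_sub_q_pow_ne_zero c))]
    have e3 : qPoch c / (1*qPoch c) = 1 := by rw [one_mul, div_self z1]
    rw [e1, e2, e3]
    rw [show q^(c+1) = q^c*q from pow_succ q c, show q^(c+2) = q^c*q^2 by
      rw [show (2:ℕ) = 1+1 from rfl, ← pow_add, show c+(1+1) = c+1+1 by ring]]
    linear_combination key
  · rw [T, T, T, T, if_neg (Nat.succ_ne_zero _), if_neg (Nat.succ_ne_zero _),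
        if_neg (Nat.succ_ne_zero _), if_neg (Nat.succ_ne_zero _)]
    rw [show j+1+1-1 = j+1 by omega, show j+1-1 = j by omega]
    rw [qb_eq (c+(j+1)+2) (j+1+1) (c+1) (by ring), qb_eq (c+(j+1)+2) (j+1) (c+2) (by ring),
        qb_eq (c+(j+1)+1) (j+1+1) c (by ring), qb_eq (c+(j+1)+1) (j+1) (c+1) (by ring),
        qb_eq (c+(j+1)+1) j (c+2) (by ring), qb_eq (c+(j+1)) (j+1) c (by ring),
        qb_eq (c+(j+1)) j (c+1) (by ring)]
    rw [show qPoch (c+(j+1)+2) = qPoch (c+j+1) * (1 - q^(c+j+2)) * (1 - q^(c+j+3)) by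
          rw [show c+(j+1)+2 = (c+j+2)+1 by ring, qPoch_succ,
              show c+j+2 = (c+j+1)+1 by ring, qPoch_succ],
        show qPoch (c+(j+1)+1) = qPoch (c+j+1) * (1 - q^(c+j+2)) by
          rw [show c+(j+1)+1 = (c+j+1)+1 by ring, qPoch_succ],
        show qPoch (c+(j+1)) = qPoch (c+j+1) by rw [show c+(j+1) = c+j+1 by ring],
        show qPoch (j+1+1) = qPoch j * (1 - q^(j+1)) * (1 - q^(j+2)) by
          rw [qPoch_succ (j+1), qPoch_succ j],
        qPoch_succ j, pc2, pc1]
    have f1 : (1:RatFunc ℚ) - q^j*q ≠ 0 := by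
      rw [← pow_succ]; exact one_sub_q_pow_ne_zero j
    have f2 : (1:RatFunc ℚ) - q^j*q^2 ≠ 0 := by
      rw [show (2:ℕ) = 1+1 from rfl, ← pow_add, show j+(1+1) = j+1+1 by ring]
      exact one_sub_q_pow_ne_zero (j+1)
    have z2 := qPoch_ne_zero j
    have key := Ekey (qPoch (c+j+1)) (qPoch j) (qPoch c) (q^c) (q^j) q z2 z1 f1 f2 g1 g2
    rw [show q^(j+1) = q^j*q from pow_succ q j,
        show q^(j+2) = q^j*q^2 by
          rw [show (2:ℕ) = 1+1 from rfl, ← pow_add, show j+(1+1) = j+1+1 by ring],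
        show q^(c+1) = q^c*q from pow_succ q c,
        show q^(c+2) = q^c*q^2 by
          rw [show (2:ℕ) = 1+1 from rfl, ← pow_add, show c+(1+1) = c+1+1 by ring],
        show q^(c+j+2) = q^c*q^j*q^2 by ring,
        show q^(c+j+3) = q^c*q^j*q^3 by ring,
        show q^(c+(j+1)+1) = q^c*q^j*q^2 by ring]
    linear_combination key

lemma sum_congr' {α M : Type*} [Fintype α] [AddCommMonoid M] {f g : α → M}
    (h : ∀ x, f x = g x) : ∑ x, f x = ∑ x, g x :=
  Finset.sum_congr rfl (fun x _ => h x)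

lemma En_eq (n : ℕ) (c : Fin (n+1) → Bool) :
    En c = ∑ j : Fin n, if c j.castSucc < c j.succ then (j:ℕ)+1 else 0 := by
  rw [En, Fin.sum_univ_castSucc]
  rw [dif_neg (by simp : ¬ ((Fin.last n : ℕ) + 1 < n + 1))]
  rw [add_zero]
  refine Finset.sum_congr rfl fun j _ => ?_
  rw [dif_pos (by simp [Fin.is_lt] : ((j.castSucc : ℕ) + 1 < n + 1))]
  rfl

lemma En_snoc_false (n : ℕ) (b : Fin n → Bool) : En (Fin.snoc b false) = En b := by
  rcases n with _ | m
  · simp [En_eq, En]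
  · rw [En_eq (m+1), En_eq m, Fin.sum_univ_castSucc]
    simp only [Fin.succ_last, Fin.snoc_last, Fin.snoc_castSucc]
    simp only [Bool.lt_iff, Bool.false_eq_true, and_false, if_false, add_zero]
    refine sum_congr' fun k => ?_
    simp [Fin.succ_castSucc, Bool.lt_iff, -Fin.castSucc_succ]

lemma En_snoc_true (n : ℕ) (b : Fin (n+1) → Bool) :
    En (Fin.snoc b true) = En b + (if b (Fin.last n) = false then n+1 else 0) := by
  rw [En_eq (n+1), En_eq n, Fin.sum_univ_castSucc]
  simp only [Fin.succ_last, Fin.snoc_last, Fin.snoc_castSucc]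
  congr 1
  · refine sum_congr' fun k => ?_
    simp [Fin.succ_castSucc, Bool.lt_iff, -Fin.castSucc_succ]
  · simp [Bool.lt_iff, Fin.val_last]

lemma cnt_snoc (n : ℕ) (b : Fin n → Bool) (v t : Bool) :
    (univ.filter (fun i => (Fin.snoc b v : Fin (n+1) → Bool) i = t)).card
      = (univ.filter (fun i => b i = t)).card + (if v = t then 1 else 0) := by
  rw [Finset.card_filter, Finset.card_filter, Fin.sum_univ_castSucc]
  simp [Fin.snoc_castSucc, Fin.snoc_last]

lemma prefix_cnt (n : ℕ) (b : Fin n → Bool) (v t : Bool) (jj : Fin n) :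
    (univ.filter (fun j : Fin (n+1) => j ≤ jj.castSucc ∧ (Fin.snoc b v : Fin (n+1) → Bool) j = t)).card
      = (univ.filter (fun j : Fin n => j ≤ jj ∧ b j = t)).card := by
  rw [Finset.card_filter, Finset.card_filter, Fin.sum_univ_castSucc]
  rw [if_neg (by simp [(Fin.castSucc_lt_last jj).not_ge])]
  rw [add_zero]
  refine sum_congr' fun k => ?_
  simp [Fin.castSucc_le_castSucc_iff, Fin.snoc_castSucc]

lemma cnt_add (n : ℕ) (b : Fin n → Bool) :
    (univ.filter (fun i => b i = true)).card + (univ.filter (fun i => b i = false)).card = n := by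
  have h := Finset.card_filter_add_card_filter_not
    (s := (univ : Finset (Fin n))) (p := fun i => b i = true)
  simpa [Bool.not_eq_true] using h

lemma highest_iff (n : ℕ) (b : Fin n → Bool) :
    Highest b = true ↔
    ∀ i : Fin n, (Finset.univ.filter (fun j : Fin n => j ≤ i ∧ b j = true)).card ≤
      (Finset.univ.filter (fun j : Fin n => j ≤ i ∧ b j = false)).card := by
  rw [Highest, decide_eq_true_iff]

lemma full_cnt (n : ℕ) (c : Fin (n+1) → Bool) (t : Bool) :
    (univ.filter (fun j : Fin (n+1) => j ≤ Fin.last n ∧ c j = t)).card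
      = (univ.filter (fun j : Fin (n+1) => c j = t)).card := by
  congr 1
  apply Finset.filter_congr
  intro j _
  simp [Fin.le_last]

lemma highest_le (n M : ℕ) (b : Fin n → Bool) (hH : Highest b = true)
    (hM : (univ.filter (fun i => b i = true)).card = M) : 2 * M ≤ n := by
  rcases n with _ | m
  · have : (univ : Finset (Fin 0)) = ∅ := rfl
    simp [← hM]
  · have h := (highest_iff _ b).1 hH (Fin.last m)
    rw [full_cnt, full_cnt] at h
    have h2 := cnt_add (m+1) b
    omega

lemma highest_snoc (n : ℕ) (b : Fin n → Bool) (v : Bool) :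
    Highest (Fin.snoc b v : Fin (n+1) → Bool) = true ↔
      (Highest b = true ∧
        2 * ((univ.filter (fun i => b i = true)).card + (if v = true then 1 else 0)) ≤ n + 1) := by
  rw [highest_iff, highest_iff, Fin.forall_fin_succ']
  have hlast : ∀ t, (univ.filter (fun j : Fin (n+1) => j ≤ Fin.last n ∧ (Fin.snoc b v : Fin (n+1) → Bool) j = t)).card
      = (univ.filter (fun i => b i = t)).card + (if v = t then 1 else 0) := by
    intro t; rw [full_cnt, cnt_snoc]
  constructor
  · rintro ⟨h1, h2⟩
    refine ⟨fun i => ?_, ?_⟩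
    · have := h1 i
      rwa [prefix_cnt, prefix_cnt] at this
    · rw [hlast, hlast] at h2
      have h3 := cnt_add n b
      rcases v with _ | _ <;> simp at h2 ⊢ <;> omega
  · rintro ⟨h1, h2⟩
    refine ⟨fun i => ?_, ?_⟩
    · rw [prefix_cnt, prefix_cnt]
      exact h1 i
    · rw [hlast, hlast]
      have h3 := cnt_add n b
      rcases v with _ | _ <;> simp at h2 ⊢ <;> omega

noncomputable def S (L M : ℕ) : RatFunc ℚ :=
  ∑ b ∈ (Finset.univ : Finset (Fin L → Bool)).filter
      (fun b => (Finset.univ.filter (fun i => b i = true)).card = M ∧ Highest b),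
    q ^ En b

noncomputable def Sv (n M : ℕ) (v : Bool) : RatFunc ℚ :=
  ∑ b ∈ (Finset.univ : Finset (Fin (n+1) → Bool)).filter
      (fun b => ((Finset.univ.filter (fun i => b i = true)).card = M ∧ Highest b)
        ∧ b (Fin.last n) = v),
    q ^ En b

lemma sum_split (n : ℕ) (f : (Fin (n+1) → Bool) → RatFunc ℚ) :
    ∑ c : Fin (n+1) → Bool, f c
      = (∑ b : Fin n → Bool, f (Fin.snoc b true)) + ∑ b : Fin n → Bool, f (Fin.snoc b false) := by
  rw [← Equiv.sum_comp (Fin.snocEquiv (fun _ => Bool)) f, Fintype.sum_prod_type,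
    Fintype.sum_bool]
  rfl

lemma S_split (n M : ℕ) : S (n+1) M = Sv n M true + Sv n M false := by
  rw [S, ← Finset.sum_filter_add_sum_filter_not _ (fun b => b (Fin.last n) = true)]
  congr 1
  · rw [Finset.filter_filter]; rfl
  · rw [Finset.filter_filter, Sv]
    congr 1
    apply Finset.filter_congr
    intro b _
    simp [Bool.not_eq_true]

lemma S_zero (L M : ℕ) (h : L < 2 * M) : S L M = 0 := by
  rw [S, Finset.filter_false_of_mem, Finset.sum_empty]
  rintro b - ⟨hM, hH⟩
  have := highest_le L M b hH hM
  omega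

lemma Sv_false (n M : ℕ) : Sv n M false = S n M := by
  rw [Sv, S, Finset.sum_filter, Finset.sum_filter, sum_split]
  have h1 : (∑ b : Fin n → Bool, if (((univ.filter (fun i => (Fin.snoc b true : Fin (n+1) → Bool) i = true)).card = M ∧ Highest (Fin.snoc b true : Fin (n+1) → Bool)) ∧ (Fin.snoc b true : Fin (n+1) → Bool) (Fin.last n) = false) then q ^ En (Fin.snoc b true : Fin (n+1) → Bool) else 0) = 0 := by
    refine Finset.sum_eq_zero fun b _ => ?_
    rw [if_neg]
    rintro ⟨-, hl⟩
    rw [Fin.snoc_last] at hl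
    simp at hl
  rw [h1, zero_add]
  refine sum_congr' fun b => ?_
  rw [En_snoc_false]
  by_cases hM : (univ.filter (fun i => b i = true)).card = M
  · by_cases hH : Highest b = true
    · rw [if_pos, if_pos ⟨hM, hH⟩]
      refine ⟨⟨?_, ?_⟩, Fin.snoc_last _ _⟩
      · rw [cnt_snoc]; simp [hM]
      · refine (highest_snoc n b false).2 ⟨hH, ?_⟩
        have := highest_le n M b hH hM
        simp
        omega
    · rw [if_neg, if_neg]
      · rintro ⟨hM', hH'⟩; exact hH hH'
      · rintro ⟨⟨-, hs⟩, -⟩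
        exact hH ((highest_snoc n b false).1 hs).1
  · rw [if_neg, if_neg]
    · rintro ⟨hM', -⟩; exact hM hM'
    · rintro ⟨⟨hs, -⟩, -⟩
      rw [cnt_snoc] at hs
      simp at hs
      exact hM hs

lemma Sv_true_zero (n : ℕ) : Sv n 0 true = 0 := by
  rw [Sv, Finset.filter_false_of_mem, Finset.sum_empty]
  rintro b - ⟨⟨h0, -⟩, hl⟩
  rw [Finset.card_eq_zero] at h0
  have : Fin.last n ∈ (univ : Finset (Fin (n+1))).filter (fun i => b i = true) :=
    Finset.mem_filter.2 ⟨Finset.mem_univ _, hl⟩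
  rw [h0] at this
  exact absurd this (Finset.notMem_empty _)

lemma Sv_succ_true (n M : ℕ) (h1 : 1 ≤ M) (h2 : 2*M ≤ n+2) :
    Sv (n+1) M true = Sv n (M-1) true + q^(n+1) * Sv n (M-1) false := by
  rw [Sv, Sv, Sv, Finset.sum_filter, Finset.sum_filter, Finset.sum_filter, sum_split (n+1),
    Finset.mul_sum]
  have hzero : (∑ b : Fin (n+1) → Bool,
      if (((univ.filter (fun i => (Fin.snoc b false : Fin (n+2) → Bool) i = true)).card = M
          ∧ Highest (Fin.snoc b false : Fin (n+2) → Bool))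
          ∧ (Fin.snoc b false : Fin (n+2) → Bool) (Fin.last (n+1)) = true)
        then q ^ En (Fin.snoc b false : Fin (n+2) → Bool) else 0) = 0 := by
    refine Finset.sum_eq_zero fun b _ => ?_
    rw [if_neg]
    rintro ⟨-, hl⟩
    rw [Fin.snoc_last] at hl
    simp at hl
  rw [hzero, add_zero, ← Finset.sum_add_distrib]
  refine sum_congr' fun b => ?_
  rw [En_snoc_true]
  by_cases hM : (univ.filter (fun i => b i = true)).card = M - 1
  · by_cases hH : Highest b = true
    · have hsnocH : Highest (Fin.snoc b true : Fin (n+2) → Bool) = true :=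
        (highest_snoc (n+1) b true).2 ⟨hH, by simp; omega⟩
      have hcnt : (univ.filter (fun i => (Fin.snoc b true : Fin (n+2) → Bool) i = true)).card = M := by
        rw [cnt_snoc]; simp; omega
      rw [if_pos ⟨⟨hcnt, hsnocH⟩, Fin.snoc_last _ _⟩]
      by_cases hl : b (Fin.last n) = false
      · rw [if_pos hl, if_neg (by rintro ⟨-, hl'⟩; rw [hl] at hl'; simp at hl'),
          if_pos ⟨⟨hM, hH⟩, hl⟩]
        rw [pow_add]
        ring
      · have hl' : b (Fin.last n) = true := by revert hl; cases b (Fin.last n) <;> simp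
        rw [if_neg hl, if_pos ⟨⟨hM, hH⟩, hl'⟩, if_neg (by rintro ⟨-, hf⟩; rw [hl'] at hf; simp at hf)]
        simp
    · rw [if_neg, if_neg, if_neg]
      · simp
      all_goals rintro ⟨⟨hc, hs⟩, -⟩
      all_goals first
        | exact hH hs
        | exact hH ((highest_snoc (n+1) b true).1 hs).1
  · rw [if_neg, if_neg, if_neg]
    · simp
    all_goals rintro ⟨⟨hc, -⟩, -⟩
    all_goals first
      | exact hM hc
      | (rw [cnt_snoc] at hc; simp at hc; omega)

lemma Sv_base_false : Sv 0 0 false = 1 := by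
  rw [Sv]
  rw [show (Finset.univ : Finset (Fin 1 → Bool)).filter
      (fun b => ((Finset.univ.filter (fun i => b i = true)).card = 0 ∧ Highest b)
        ∧ b (Fin.last 0) = false) = {fun _ => false} from by decide]
  rw [Finset.sum_singleton]
  rw [show En (fun _ => false : Fin 1 → Bool) = 0 from by decide, pow_zero]

lemma S_base : S 0 0 = 1 := by
  rw [S]
  rw [show (Finset.univ : Finset (Fin 0 → Bool)).filter
      (fun b => (Finset.univ.filter (fun i => b i = true)).card = 0 ∧ Highest b)
      = {fun i => i.elim0} from by decide]
  rw [Finset.sum_singleton]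
  rw [show En (fun i => i.elim0 : Fin 0 → Bool) = 0 from by decide, pow_zero]

lemma qb_zero (L : ℕ) : qb L 0 = 1 := by
  rw [qb, Nat.sub_zero, qPoch_zero, one_mul, div_self (qPoch_ne_zero L)]

lemma T_zero (L : ℕ) : T L 0 = 1 := by
  rw [T, if_pos rfl, qb_zero, sub_zero]

lemma T_symm_zero (m : ℕ) : T (2 * m + 1) (m + 1) = 0 := by
  have h1 : 2 * m + 1 - (m + 1) = m := by omega
  have h2 : 2 * m + 1 - m = m + 1 := by omega
  simp only [T, if_neg (Nat.succ_ne_zero m), Nat.add_sub_cancel, qb, h1, h2]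
  rw [mul_comm]
  ring

lemma AB : ∀ n : ℕ, ∀ M : ℕ, 2*M ≤ n+1 →
    (Sv n M false = T n M ∧ Sv n M true = T (n+1) M - T n M) := by
  intro n
  induction n with
  | zero =>
    intro M hM
    have hM0 : M = 0 := by omega
    subst hM0
    exact ⟨by rw [Sv_base_false, T_zero], by rw [Sv_true_zero, T_zero, T_zero]; ring⟩
  | succ n ih =>
    intro M hM
    constructor
    · rw [Sv_false]
      by_cases h : 2*M ≤ n+1
      · rw [S_split]
        obtain ⟨h1, h2⟩ := ih M h
        rw [h1, h2]; ring
      · rw [S_zero _ _ (by omega)]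
        obtain ⟨m, rfl⟩ : ∃ m, M = m+1 := ⟨M-1, by omega⟩
        rw [show n+1 = 2*m+1 by omega, T_symm_zero]
    · rcases Nat.eq_zero_or_pos M with h0 | h1
      · subst h0
        rw [Sv_true_zero, T_zero, T_zero]; ring
      · obtain ⟨k, rfl⟩ : ∃ k, M = k+1 := ⟨M-1, by omega⟩
        rw [Sv_succ_true n (k+1) (by omega) (by omega), show k+1-1 = k by omega]
        obtain ⟨h1', h2'⟩ := ih k (by omega)
        rw [h1', h2']
        obtain ⟨c, rfl⟩ : ∃ c, n = c + k := ⟨n-k, by omega⟩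
        linear_combination -(E2 c k)

theorem stmt1 (L M : ℕ) (hML : 2 * M ≤ L) :
    ∑ b ∈ (Finset.univ : Finset (Fin L → Bool)).filter
        (fun b => (Finset.univ.filter (fun i => b i = true)).card = M ∧ Highest b),
      q ^ En b = qb L M - (if M = 0 then 0 else qb L (M - 1)) := by
  show S L M = T L M
  rcases L with _ | n
  · have hM0 : M = 0 := by omega
    subst hM0
    rw [S_base, T_zero]
  · rw [S_split]
    obtain ⟨h1, h2⟩ := AB n M (by omega)
    rw [h1, h2]
    ring
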